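/- Let B and C be categories, let B be an object of B and C an object of C, and let U : Age_B(B) → Age_C(C) be a faithful functor such that: (1) U(B) = C; (2) for every object B' of Age_B(B) with U(B') = C one has Hom_B(B,B') ≠ ∅; and (3) for every f ∈ Hom_C(C,C) there exist an object B' of Age_B(B) with U(B') = C and a morphism g ∈ Hom_B(B',B) with U(g) = f. Then for every object A of Age_B(B) and every positive integer t: if C ⟶ (C)^{U(A)}_{k,t} holds in C for all k ≥ 2, then B ⟶ (B)^{A}_{k,t} holds in B for all k ≥ 2; in particular, if U(A) has finite big Ramsey degree T(U(A),C) in C, then A has finite big Ramsey degree in B and T(A,B) ≤ T(U(A),C). -/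

import Mathlib

open CategoryTheory

universe v₁ u₁ v₂ u₂

/-- `ramseyArrow A B X k t` means `X ⟶ (B)^A_{k,t}`. -/
def ramseyArrow {C : Type u₁} [Category.{v₁} C] (A B X : C) (k t : ℕ) : Prop :=
  ∀ χ : (A ⟶ X) → Fin k, ∃ w : B ⟶ X,
    (χ '' (Set.range fun f : A ⟶ B => f ≫ w)).ncard ≤ t

/-- The age of `X` in `C`: the full subcategory of objects admitting a
morphism into `X`. -/
abbrev AgeCat {C : Type u₁} [Category.{v₁} C] (X : C) :=
  ObjectProperty.FullSubcategory (fun A : C => Nonempty (A ⟶ X))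

theorem stmt4 {B : Type u₁} [Category.{v₁} B] {C : Type u₂} [Category.{v₂} C]
    (B₀ : B) (C₀ : C)
    (U : AgeCat B₀ ⥤ AgeCat C₀) [U.Faithful]
    (h1 : U.obj ⟨B₀, ⟨𝟙 B₀⟩⟩ = ⟨C₀, ⟨𝟙 C₀⟩⟩)
    (h2 : ∀ B' : AgeCat B₀, U.obj B' = ⟨C₀, ⟨𝟙 C₀⟩⟩ →
      Nonempty ((⟨B₀, ⟨𝟙 B₀⟩⟩ : AgeCat B₀) ⟶ B'))
    (h3 : ∀ f : (⟨C₀, ⟨𝟙 C₀⟩⟩ : AgeCat C₀) ⟶ ⟨C₀, ⟨𝟙 C₀⟩⟩,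
      ∃ (B' : AgeCat B₀) (h : U.obj B' = ⟨C₀, ⟨𝟙 C₀⟩⟩)
        (g : B' ⟶ (⟨B₀, ⟨𝟙 B₀⟩⟩ : AgeCat B₀)),
        U.map g = eqToHom h ≫ f ≫ eqToHom h1.symm)
    (A : AgeCat B₀) (t : ℕ) (ht : 1 ≤ t)
    (hC : ∀ k, 2 ≤ k → ramseyArrow (U.obj A).obj C₀ C₀ k t) :
    ∀ k, 2 ≤ k → ramseyArrow A.obj B₀ B₀ k t := by
  intro k hk χ
  classical
  let χ' : ((U.obj A).obj ⟶ C₀) → Fin k := fun f =>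
    if h : ∃ g : A ⟶ (⟨B₀, ⟨𝟙 B₀⟩⟩ : AgeCat B₀), U.map g ≫ eqToHom h1
        = (ObjectProperty.homMk f : U.obj A ⟶ (⟨C₀, ⟨𝟙 C₀⟩⟩ : AgeCat C₀)) then χ h.choose.hom
    else ⟨0, by omega⟩
  obtain ⟨w', hw'⟩ := hC k hk χ'
  obtain ⟨B', hB', g', hg'⟩ := h3 (ObjectProperty.homMk w' : (⟨C₀, ⟨𝟙 C₀⟩⟩ : AgeCat C₀) ⟶ ⟨C₀, ⟨𝟙 C₀⟩⟩)
  obtain ⟨e⟩ := h2 B' hB'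
  refine ⟨(e ≫ g' : (⟨B₀, ⟨𝟙 B₀⟩⟩ : AgeCat B₀) ⟶ ⟨B₀, ⟨𝟙 B₀⟩⟩).hom, ?_⟩
  refine le_trans (Set.ncard_le_ncard ?_
    (Set.Finite.subset Set.finite_univ (Set.subset_univ _))) hw'
  rintro c ⟨_, ⟨f, rfl⟩, rfl⟩
  refine ⟨_, ⟨((U.map ((ObjectProperty.homMk f : A ⟶ (⟨B₀, ⟨𝟙 B₀⟩⟩ : AgeCat B₀)) ≫ e) ≫ eqToHom hB' :
      U.obj A ⟶ (⟨C₀, ⟨𝟙 C₀⟩⟩ : AgeCat C₀)).hom), rfl⟩, ?_⟩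
  have key : U.map ((ObjectProperty.homMk f : A ⟶ (⟨B₀, ⟨𝟙 B₀⟩⟩ : AgeCat B₀)) ≫ e ≫ g') ≫ eqToHom h1
      = ((U.map ((ObjectProperty.homMk f : A ⟶ (⟨B₀, ⟨𝟙 B₀⟩⟩ : AgeCat B₀)) ≫ e) ≫ eqToHom hB')
          ≫ (ObjectProperty.homMk w' : (⟨C₀, ⟨𝟙 C₀⟩⟩ : AgeCat C₀) ⟶ ⟨C₀, ⟨𝟙 C₀⟩⟩)) := by
    simp [hg']
  have hex : ∃ g : A ⟶ (⟨B₀, ⟨𝟙 B₀⟩⟩ : AgeCat B₀), U.map g ≫ eqToHom h1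
      = ((U.map ((ObjectProperty.homMk f : A ⟶ (⟨B₀, ⟨𝟙 B₀⟩⟩ : AgeCat B₀)) ≫ e) ≫ eqToHom hB')
          ≫ (ObjectProperty.homMk w' : (⟨C₀, ⟨𝟙 C₀⟩⟩ : AgeCat C₀) ⟶ ⟨C₀, ⟨𝟙 C₀⟩⟩)) := ⟨_, key⟩
  have hc := hex.choose_spec.trans key.symm
  have heq : hex.choose = (ObjectProperty.homMk f : A ⟶ (⟨B₀, ⟨𝟙 B₀⟩⟩ : AgeCat B₀)) ≫ e ≫ g' :=
    U.map_injective ((cancel_mono (eqToHom h1)).mp hc)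
  exact (dif_pos hex).trans (congrArg (fun g => χ g.hom) heq)
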